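/- Choi-divergence upper bound on generalized comb divergences (channel case n = 1): let D be a state divergence that is monotone under channels and satisfies the direct-sum property D(∑_x p_x|x⟩⟨x|⊗ρ¹_x ‖ ∑_x p_x|x⟩⟨x|⊗ρ²_x) = ∑_x p_x D(ρ¹_x‖ρ²_x). Then for any two channels M, N : M_d(ℂ) → M_{d'}(ℂ) and any input state ρ_{RA} (with reference system R), D(M(ρ_{RA}) ‖ N(ρ_{RA})) ≤ d · D(Υ^M ‖ Υ^N), where Υ^M, Υ^N are the Choi states; consequently sup_ρ D(M(ρ)‖N(ρ)) ≤ d · D(Υ^M‖Υ^N). -/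

import Mathlib

open Matrix Kronecker
open scoped ComplexOrder

noncomputable section

/-- Base-2 matrix logarithm of a Hermitian matrix, via the spectral theorem
(with the convention `log 0 = 0`); `0` on non-Hermitian matrices. -/
def mlog2 {n : Type*} [Fintype n] [DecidableEq n] (A : Matrix n n ℂ) : Matrix n n ℂ :=
  if h : A.IsHermitian then
    (h.eigenvectorUnitary : Matrix n n ℂ) *
      Matrix.diagonal (fun i => (Real.logb 2 (h.eigenvalues i) : ℂ)) *
      (star h.eigenvectorUnitary : Matrix n n ℂ)
  else 0

/-- Quantum relative entropy `S(ρ‖σ) = Tr[ρ (log₂ ρ − log₂ σ)]`. -/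
def relEnt {n : Type*} [Fintype n] [DecidableEq n] (ρ σ : Matrix n n ℂ) : ℝ :=
  (Matrix.trace (ρ * (mlog2 ρ - mlog2 σ))).re

/-- Von Neumann entropy `H(ρ) = −Tr[ρ log₂ ρ]`. -/
def vnEnt {n : Type*} [Fintype n] [DecidableEq n] (ρ : Matrix n n ℂ) : ℝ :=
  -(Matrix.trace (ρ * mlog2 ρ)).re

/-- A density matrix: positive semidefinite with unit trace. -/
def IsDensity {n : Type*} [Fintype n] (ρ : Matrix n n ℂ) : Prop :=
  ρ.PosSemidef ∧ ρ.trace = 1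

/-- Partial trace over the second (B) factor. -/
def ptraceB {m n : Type*} [Fintype n] (M : Matrix (m × n) (m × n) ℂ) : Matrix m m ℂ :=
  Matrix.of fun i j => ∑ k, M (i, k) (j, k)

/-- Partial trace over the first (A) factor. -/
def ptraceA {m n : Type*} [Fintype m] (M : Matrix (m × n) (m × n) ℂ) : Matrix n n ℂ :=
  Matrix.of fun a b => ∑ k, M (k, a) (k, b)

/-- The Choi state `(id ⊗ M)(Φ)` of a map `M : M_d(ℂ) → M_{d'}(ℂ)`, where
`Φ = (1/d) ∑_{i,j} |ii⟩⟨jj|` is the maximally entangled state. -/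
def ChoiOf {d d' : ℕ} (M : Matrix (Fin d) (Fin d) ℂ → Matrix (Fin d') (Fin d') ℂ) :
    Matrix (Fin d × Fin d') (Fin d × Fin d') ℂ :=
  Matrix.of fun p q =>
    ((d : ℂ))⁻¹ * M (Matrix.single p.1 q.1 1) p.2 q.2

/-- Complete positivity of a linear map on matrices: every finite ancilla
extension `id_k ⊗ M` maps positive semidefinite matrices to positive
semidefinite matrices. -/
def IsCompletelyPositive {n m : Type*} [Fintype n] [DecidableEq n] [Fintype m] [DecidableEq m]
    (M : Matrix n n ℂ →ₗ[ℂ] Matrix m m ℂ) : Prop :=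
  ∀ (k : ℕ) (X : Matrix (Fin k × n) (Fin k × n) ℂ), X.PosSemidef →
    (Matrix.of fun (p q : Fin k × m) =>
      M (Matrix.of fun a b => X (p.1, a) (q.1, b)) p.2 q.2).PosSemidef

/-- The classical-quantum state `∑_x p_x |x⟩⟨x| ⊗ ρ_x`. -/
def cqState {ι m : Type*} [DecidableEq ι] (p : ι → ℝ) (ρ : ι → Matrix m m ℂ) :
    Matrix (ι × m) (ι × m) ℂ :=
  Matrix.of fun x y => if x.1 = y.1 then (p x.1 : ℂ) * ρ x.1 x.2 y.2 else 0

/-- The maximally entangled two-qubit state `Φ = (1/2) ∑_{i,j} |ii⟩⟨jj|`. -/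
def Phi2 : Matrix (Fin 2 × Fin 2) (Fin 2 × Fin 2) ℂ :=
  Matrix.of fun p q => if p.1 = p.2 ∧ q.1 = q.2 then (1 / 2 : ℂ) else 0

end

noncomputable section
/-- The extension `id_R ⊗ M` of a map `M` to a joint input with reference `R`. -/
def extChan {R : Type*} {d d' : ℕ}
    (M : Matrix (Fin d) (Fin d) ℂ →ₗ[ℂ] Matrix (Fin d') (Fin d') ℂ)
    (ρ : Matrix (R × Fin d) (R × Fin d) ℂ) : Matrix (R × Fin d') (R × Fin d') ℂ :=
  Matrix.of fun p q => M (Matrix.of fun a b => ρ (p.1, a) (q.1, b)) p.2 q.2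
end

noncomputable section AuxChoi
set_option linter.unusedSectionVars false
open Matrix
variable {n m ι : Type*} [Fintype n] [DecidableEq n] [Fintype m] [DecidableEq m] [Fintype ι]

lemma posSemidef_sum (f : ι → Matrix n n ℂ) (h : ∀ i, (f i).PosSemidef) :
    (∑ i, f i).PosSemidef :=
  Finset.sum_induction f _ (fun _ _ ha hb => ha.add hb) Matrix.PosSemidef.zero (fun i _ => h i)

/-- The Kraus-form map `X ↦ ∑ₑ Kₑ X Kₑᴴ`. -/
def krausMap (K : ι → Matrix m n ℂ) : Matrix n n ℂ →ₗ[ℂ] Matrix m m ℂ where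
  toFun X := ∑ e, K e * X * (K e)ᴴ
  map_add' X Y := by simp [Matrix.mul_add, Matrix.add_mul, Finset.sum_add_distrib]
  map_smul' c X := by simp [Matrix.mul_smul, Matrix.smul_mul, Finset.smul_sum]

lemma krausMap_apply (K : ι → Matrix m n ℂ) (X : Matrix n n ℂ) :
    krausMap K X = ∑ e, K e * X * (K e)ᴴ := rfl

lemma sum_ite_fst {α β : Type*} [Fintype α] [DecidableEq α] [Fintype β] (a : α)
    (f : α → β → ℂ) :
    (∑ x : α, ∑ y : β, if a = x then f x y else 0) = ∑ y, f a y := by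
  rw [Finset.sum_comm]
  simp

lemma sum_ite_const {β : Type*} [Fintype β] (c : Prop) [Decidable c] (f : β → ℂ) :
    (∑ y : β, if c then f y else 0) = if c then ∑ y, f y else 0 := by
  split <;> simp

lemma sum_ite_fst' {α β : Type*} [Fintype α] [DecidableEq α] [Fintype β] (a : α)
    (f : α → β → ℂ) :
    (∑ x : α, ∑ y : β, if x = a then f x y else 0) = ∑ y, f a y := by
  rw [Finset.sum_comm]
  simp

lemma krausMap_cp (K : ι → Matrix m n ℂ) : IsCompletelyPositive (krausMap K) := by
  intro k X hX
  have hEq : (Matrix.of fun (p q : Fin k × m) =>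
      (krausMap K) (Matrix.of fun a b => X (p.1, a) (q.1, b)) p.2 q.2)
      = ∑ e, (Matrix.of fun (p : Fin k × m) (q : Fin k × n) =>
          if p.1 = q.1 then K e p.2 q.2 else 0) * X *
        (Matrix.of fun (p : Fin k × m) (q : Fin k × n) =>
          if p.1 = q.1 then K e p.2 q.2 else 0)ᴴ := by
    ext p q
    simp only [Matrix.of_apply, krausMap_apply, Matrix.sum_apply]
    refine Finset.sum_congr rfl fun e _ => ?_
    simp only [Matrix.mul_apply, Matrix.conjTranspose_apply, Matrix.of_apply,
      Fintype.sum_prod_type, ite_mul, zero_mul, mul_ite, mul_zero,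
      apply_ite (star : ℂ → ℂ), star_zero, Finset.sum_ite_eq, Finset.mem_univ, if_true,
      sum_ite_fst]
  rw [hEq]
  exact posSemidef_sum _ fun e => hX.mul_mul_conjTranspose_same _

lemma krausMap_trace (K : ι → Matrix m n ℂ) (h : ∑ e, (K e)ᴴ * K e = 1)
    (X : Matrix n n ℂ) : (krausMap K X).trace = X.trace := by
  rw [krausMap_apply, Matrix.trace_sum]
  have h1 : ∀ e : ι, (K e * X * (K e)ᴴ).trace = ((K e)ᴴ * K e * X).trace := fun e =>
    Matrix.trace_mul_cycle (K e) X (K e)ᴴ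
  simp_rw [h1, ← Matrix.trace_sum, ← Finset.sum_mul, h, Matrix.one_mul]

lemma linmap_apply_eq_sum {d d' : ℕ}
    (M : Matrix (Fin d) (Fin d) ℂ →ₗ[ℂ] Matrix (Fin d') (Fin d') ℂ)
    (A : Matrix (Fin d) (Fin d) ℂ) (b c : Fin d') :
    M A b c = ∑ i, ∑ j, A i j * M (Matrix.single i j 1) b c := by
  conv_lhs => rw [Matrix.matrix_eq_sum_single A]
  rw [map_sum, Matrix.sum_apply]
  refine Finset.sum_congr rfl fun i _ => ?_
  rw [map_sum, Matrix.sum_apply]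
  refine Finset.sum_congr rfl fun j _ => ?_
  have h1 : Matrix.single i j (A i j) = A i j • Matrix.single i j (1 : ℂ) := by
    rw [Matrix.smul_single, smul_eq_mul, mul_one]
  rw [h1, LinearMap.map_smul, Matrix.smul_apply, smul_eq_mul]

lemma trace_stdBasisMatrix {d : ℕ} (i j : Fin d) :
    (Matrix.single i j (1 : ℂ)).trace = if i = j then 1 else 0 := by
  by_cases h : i = j
  · subst h
    simp [Matrix.trace, Matrix.diag, Matrix.single, Finset.sum_ite_eq]
  · simp only [Matrix.trace, Matrix.diag, Matrix.single, Matrix.of_apply, h, if_false]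
    rw [Finset.sum_eq_zero]
    intro x _
    by_cases hx : i = x
    · subst hx
      simp [fun hj : i = j => h hj]
      intro h'
      exact h h'.symm
    · simp [hx]

lemma one_sub_psd {A : Matrix n n ℂ} (hA : A.PosSemidef) (ht : A.trace = 1) :
    ((1 : Matrix n n ℂ) - A).PosSemidef := by
  have hH := hA.1
  have hU : (hH.eigenvectorUnitary : Matrix n n ℂ) *
      (star hH.eigenvectorUnitary : Matrix n n ℂ) = 1 :=
    (Matrix.mem_unitaryGroup_iff).mp hH.eigenvectorUnitary.2
  have hU' : (star hH.eigenvectorUnitary : Matrix n n ℂ) *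
      (hH.eigenvectorUnitary : Matrix n n ℂ) = 1 :=
    (Matrix.mem_unitaryGroup_iff').mp hH.eigenvectorUnitary.2
  have hsum : ∑ i, hH.eigenvalues i = 1 := by
    have h2 : A.trace = ∑ i, (hH.eigenvalues i : ℂ) := by
      conv_lhs => rw [hH.spectral_theorem, Unitary.conjStarAlgAut_apply]
      rw [Matrix.trace_mul_cycle, hU', Matrix.one_mul, Matrix.trace_diagonal]
      simp
    rw [ht] at h2
    exact_mod_cast h2.symm
  have hle : ∀ i, hH.eigenvalues i ≤ 1 := fun i =>
    hsum ▸ Finset.single_le_sum (fun j _ => hA.eigenvalues_nonneg j) (Finset.mem_univ i)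
  have key : (1 : Matrix n n ℂ) - A =
      (hH.eigenvectorUnitary : Matrix n n ℂ) *
        Matrix.diagonal (fun i => ((1 - hH.eigenvalues i : ℝ) : ℂ)) *
        (hH.eigenvectorUnitary : Matrix n n ℂ)ᴴ := by
    have hd : Matrix.diagonal (fun i => ((1 - hH.eigenvalues i : ℝ) : ℂ)) =
        1 - Matrix.diagonal (RCLike.ofReal ∘ hH.eigenvalues) := by
      ext i j
      by_cases h : i = j
      · subst h
        simp [Matrix.diagonal_apply, Matrix.one_apply]
      · simp [Matrix.diagonal_apply, Matrix.one_apply, h]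
    rw [hd, Matrix.mul_sub, Matrix.sub_mul, Matrix.mul_one,
      ← Matrix.star_eq_conjTranspose, hU, ← Unitary.conjStarAlgAut_apply (S := ℂ), ← hH.spectral_theorem]
  rw [key]
  refine Matrix.PosSemidef.mul_mul_conjTranspose_same ?_ _
  rw [Matrix.posSemidef_diagonal_iff]
  intro i
  rw [Complex.zero_le_real]
  linarith [hle i]

lemma kron_id_psd {B : Matrix n n ℂ} (hB : B.PosSemidef) :
    (Matrix.of fun (x y : n × m) =>
      B x.1 y.1 * (if x.2 = y.2 then (1 : ℂ) else 0)).PosSemidef := by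
  refine Matrix.PosSemidef.of_dotProduct_mulVec_nonneg ?_ ?_
  · ext x y
    have hB1 : star (B y.1 x.1) = B x.1 y.1 := by
      rw [← Matrix.conjTranspose_apply, hB.1]
    simp only [Matrix.conjTranspose_apply, Matrix.of_apply, star_mul',
      apply_ite (star : ℂ → ℂ), star_one, star_zero, hB1]
    by_cases h : x.2 = y.2 <;> simp [h, eq_comm, mul_comm]
  · intro x
    have key : dotProduct (star x)
        ((Matrix.of fun (x y : n × m) => B x.1 y.1 * (if x.2 = y.2 then (1:ℂ) else 0)) *ᵥ x)
        = ∑ b : m, dotProduct (star fun i => x (i, b)) (B *ᵥ fun i => x (i, b)) := by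
      simp only [dotProduct, Matrix.mulVec, Pi.star_apply, Matrix.of_apply,
        Fintype.sum_prod_type, mul_ite, mul_one, mul_zero, ite_mul, zero_mul,
        Finset.sum_ite_eq, Finset.sum_ite_eq', Finset.mem_univ, if_true, Finset.mul_sum]
      rw [Finset.sum_comm]
    rw [key]
    exact Finset.sum_nonneg fun b _ => hB.dotProduct_mulVec_nonneg _

lemma ptraceA_psd {R k : Type*} [Fintype R] [DecidableEq R] [Fintype k]
    {ρ : Matrix (R × k) (R × k) ℂ}
    (h : ρ.PosSemidef) : (ptraceA ρ).PosSemidef := by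
  refine Matrix.PosSemidef.of_dotProduct_mulVec_nonneg ?_ ?_
  · ext a b
    have h1 : ∀ p q, star (ρ q p) = ρ p q := fun p q => by
      rw [← Matrix.conjTranspose_apply, h.1]
    simp only [Matrix.conjTranspose_apply, ptraceA, Matrix.of_apply, star_sum, h1]
  · intro x
    have hr : ∀ r : R, dotProduct
            (star fun p : R × k => if p.1 = r then x p.2 else 0)
            (ρ *ᵥ fun p : R × k => if p.1 = r then x p.2 else 0)
        = ∑ a : k, ∑ b : k, star (x a) * (ρ (r, a) (r, b) * x b) := by
      intro r
      simp only [dotProduct, Matrix.mulVec, Pi.star_apply,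
        Fintype.sum_prod_type, apply_ite (star : ℂ → ℂ), star_zero, mul_ite, mul_zero,
        ite_mul, zero_mul, sum_ite_const, Finset.sum_ite_eq, Finset.sum_ite_eq',
        Finset.mem_univ, if_true, Finset.mul_sum]
    have key : dotProduct (star x) (ptraceA ρ *ᵥ x)
        = ∑ r : R, dotProduct
            (star fun p : R × k => if p.1 = r then x p.2 else 0)
            (ρ *ᵥ fun p : R × k => if p.1 = r then x p.2 else 0) := by
      simp only [hr]
      simp only [dotProduct, Matrix.mulVec, Pi.star_apply, ptraceA, Matrix.of_apply,
        Finset.sum_mul, Finset.mul_sum]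
      refine Eq.trans (Finset.sum_congr rfl fun a _ => Finset.sum_comm) ?_
      exact Finset.sum_comm
    rw [key]
    exact Finset.sum_nonneg fun r _ => h.dotProduct_mulVec_nonneg _

lemma ptraceA_trace {R k : Type*} [Fintype R] [Fintype k] (ρ : Matrix (R × k) (R × k) ℂ) :
    (ptraceA ρ).trace = ρ.trace := by
  simp only [Matrix.trace, Matrix.diag, ptraceA, Matrix.of_apply, Fintype.sum_prod_type]
  rw [Finset.sum_comm]

open scoped MatrixOrder in
lemma exists_herm_sqrt {A : Matrix n n ℂ} (h : A.PosSemidef) :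
    ∃ B : Matrix n n ℂ, B.PosSemidef ∧ B * B = A :=
  ⟨CFC.sqrt A, (CFC.sqrt_nonneg A).posSemidef, CFC.sqrt_mul_sqrt_self A h.nonneg⟩

end AuxChoi
set_option maxHeartbeats 1000000 in
theorem choi_divergence_upper_bound {d d' : ℕ} (hd : 0 < d)
    (D : ∀ (n : Type) [Fintype n] [DecidableEq n],
      Matrix n n ℂ → Matrix n n ℂ → ℝ)
    (hnonneg : ∀ (n : Type) [Fintype n] [DecidableEq n]
      (ρ σ : Matrix n n ℂ), IsDensity ρ → IsDensity σ → 0 ≤ D n ρ σ)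
    (hmono : ∀ (n m : Type) [Fintype n] [DecidableEq n] [Fintype m] [DecidableEq m]
      (E : Matrix n n ℂ →ₗ[ℂ] Matrix m m ℂ),
      IsCompletelyPositive E → (∀ X, (E X).trace = X.trace) →
      ∀ ρ σ : Matrix n n ℂ, IsDensity ρ → IsDensity σ →
        D m (E ρ) (E σ) ≤ D n ρ σ)
    (hds : ∀ (n ι : Type) [Fintype n] [DecidableEq n] [Fintype ι] [DecidableEq ι]
      (p : ι → ℝ), (∀ x, 0 ≤ p x) → (∑ x, p x = 1) →
      ∀ ρ₁ ρ₂ : ι → Matrix n n ℂ,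
        (∀ x, IsDensity (ρ₁ x)) → (∀ x, IsDensity (ρ₂ x)) →
        D (ι × n) (cqState p ρ₁) (cqState p ρ₂) = ∑ x, p x * D n (ρ₁ x) (ρ₂ x))
    (M N : Matrix (Fin d) (Fin d) ℂ →ₗ[ℂ] Matrix (Fin d') (Fin d') ℂ)
    (hMcp : IsCompletelyPositive M) (hMtp : ∀ X, (M X).trace = X.trace)
    (hNcp : IsCompletelyPositive N) (hNtp : ∀ X, (N X).trace = X.trace)
    (R : Type) [Fintype R] [DecidableEq R]
    (ρ : Matrix (R × Fin d) (R × Fin d) ℂ) (hρ : IsDensity ρ) :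
    D (R × Fin d') (extChan M ρ) (extChan N ρ) ≤
      d * D (Fin d × Fin d') (ChoiOf (⇑M)) (ChoiOf (⇑N)) := by
  classical
  have hdR : (0 : ℝ) < d := by exact_mod_cast hd
  have hdC : (d : ℂ) ≠ 0 := by exact_mod_cast hd.ne'
  have hR : Nonempty R := by
    by_contra hc
    rw [not_nonempty_iff] at hc
    have h0 : ρ.trace = 0 := by
      rw [Matrix.trace]
      exact Finset.sum_of_isEmpty _
    rw [hρ.2] at h0
    exact one_ne_zero h0
  have hd' : 0 < d' := by
    by_contra hc
    push_neg at hc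
    have h0 : d' = 0 := Nat.le_zero.mp hc
    subst h0
    have h1 := hMtp 1
    have h2 : (M 1).trace = 0 := by
      rw [Matrix.trace]
      exact Finset.sum_of_isEmpty _
    rw [h2, Matrix.trace_one] at h1
    simp only [Fintype.card_fin] at h1
    exact hdC h1.symm
  haveI : NeZero d' := ⟨hd'.ne'⟩
  haveI : Nonempty (Fin d') := ⟨⟨0, hd'⟩⟩
  -- the reduced state on A and the measurement operator P
  have hρApsd : (ptraceA ρ).PosSemidef := ptraceA_psd hρ.1
  have hρAtr : (ptraceA ρ).trace = 1 := by rw [ptraceA_trace, hρ.2]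
  have hB1 : ((1 : Matrix (Fin d) (Fin d) ℂ) - (ptraceA ρ)ᵀ).PosSemidef :=
    one_sub_psd hρApsd.transpose (by rw [Matrix.trace_transpose, hρAtr])
  set P : Matrix (Fin d × Fin d') (Fin d × Fin d') ℂ :=
    Matrix.of fun x y => ptraceA ρ y.1 x.1 * (if x.2 = y.2 then 1 else 0) with hPdef
  have hQeq : (1 : Matrix (Fin d × Fin d') (Fin d × Fin d') ℂ) - P
      = Matrix.of fun x y =>
          ((1 : Matrix (Fin d) (Fin d) ℂ) - (ptraceA ρ)ᵀ) x.1 y.1 *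
            (if x.2 = y.2 then 1 else 0) := by
    ext x y
    simp only [Matrix.sub_apply, Matrix.of_apply, hPdef, Matrix.one_apply,
      Matrix.transpose_apply, Prod.ext_iff]
    by_cases h : x.2 = y.2 <;> by_cases h1 : x.1 = y.1 <;> simp [h, h1]
  have hQ : ((1 : Matrix (Fin d × Fin d') (Fin d × Fin d') ℂ) - P).PosSemidef := by
    rw [hQeq]; exact kron_id_psd hB1
  -- the garbage state τ
  set cR : ℝ := ((Fintype.card (R × Fin d') : ℝ))⁻¹ with hcR
  have hcard : 0 < Fintype.card (R × Fin d') := Fintype.card_pos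
  set τ : Matrix (R × Fin d') (R × Fin d') ℂ := Matrix.diagonal (fun _ => (cR : ℂ)) with hτdef
  have hτpsd : τ.PosSemidef := by
    rw [hτdef, Matrix.posSemidef_diagonal_iff]
    intro i
    rw [Complex.zero_le_real]
    positivity
  have hτtr : τ.trace = 1 := by
    rw [hτdef, Matrix.trace_diagonal]
    rw [Finset.sum_const, Finset.card_univ, nsmul_eq_mul, hcR]
    push_cast
    field_simp
  have hτ : IsDensity τ := ⟨hτpsd, hτtr⟩
  -- square roots
  obtain ⟨W, hWpsd, hWW⟩ := exists_herm_sqrt hρ.1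
  have hWs : ∀ i j, star (W i j) = W j i := fun i j => by
    rw [← Matrix.conjTranspose_apply, hWpsd.1]
  obtain ⟨S, hSpsd, hSS⟩ := exists_herm_sqrt hτpsd
  have hSs : ∀ i j, star (S i j) = S j i := fun i j => by
    rw [← Matrix.conjTranspose_apply, hSpsd.1]
  obtain ⟨T, hTpsd, hTT⟩ := exists_herm_sqrt hQ
  have hTs : ∀ i j, star (T i j) = T j i := fun i j => by
    rw [← Matrix.conjTranspose_apply, hTpsd.1]
  -- the Kraus operators of the steering channel
  set K : (R × Fin d) ⊕ ((R × Fin d') × (Fin d × Fin d')) →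
      Matrix (Fin 2 × (R × Fin d')) (Fin d × Fin d') ℂ :=
    Sum.elim
      (fun e => Matrix.of fun p q =>
        if p.1 = 0 then (if p.2.2 = q.2 then W (p.2.1, q.1) e else 0) else 0)
      (fun uv => Matrix.of fun p q =>
        if p.1 = 1 then S p.2 uv.1 * T uv.2 q else 0) with hKdef
  have hWsum : ∀ a b, ∑ e, W a e * star (W b e) = ρ a b := by
    intro a b
    conv_rhs => rw [← hWW]
    rw [Matrix.mul_apply]
    exact Finset.sum_congr rfl fun e _ => by rw [hWs]
  -- the Kraus operators sum to the identity
  have hsucc : ∑ e : R × Fin d, (K (Sum.inl e))ᴴ * K (Sum.inl e) = P := by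
    ext x y
    simp only [hKdef, Sum.elim_inl, Matrix.sum_apply, Matrix.mul_apply,
      Matrix.conjTranspose_apply, Matrix.of_apply, Fintype.sum_prod_type, Fin.sum_univ_two,
      apply_ite (star : ℂ → ℂ), star_zero, ite_mul, zero_mul, mul_ite, mul_zero,
      sum_ite_const, Finset.sum_ite_eq, Finset.sum_ite_eq', Finset.mem_univ, if_true,
      hPdef, one_ne_zero, if_false, Finset.sum_const_zero, add_zero, zero_add]
    by_cases hxy : x.2 = y.2
    · rw [if_pos hxy.symm, if_pos hxy, mul_one]
      refine Eq.trans (Finset.sum_congr rfl fun x1 _ => Finset.sum_comm) ?_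
      refine Eq.trans Finset.sum_comm ?_
      simp only [ptraceA, Matrix.of_apply]
      refine Finset.sum_congr rfl fun r _ => ?_
      rw [← hWsum (r, y.1) (r, x.1), Fintype.sum_prod_type]
      exact Finset.sum_congr rfl fun a _ => Finset.sum_congr rfl fun b _ => mul_comm _ _
    · rw [if_neg (fun h => hxy h.symm), if_neg hxy]
  have hfail : ∑ uv : (R × Fin d') × (Fin d × Fin d'),
      (K (Sum.inr uv))ᴴ * K (Sum.inr uv) = 1 - P := by
    ext x y
    simp only [hKdef, Sum.elim_inr, Matrix.sum_apply, Matrix.mul_apply,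
      Matrix.conjTranspose_apply, Matrix.of_apply, Fintype.sum_prod_type, Fin.sum_univ_two,
      apply_ite (star : ℂ → ℂ), star_zero, star_mul', ite_mul, zero_mul, mul_ite, mul_zero,
      sum_ite_const, Finset.sum_ite_eq, Finset.sum_ite_eq', Finset.mem_univ, if_true,
      one_ne_zero, if_false, Finset.sum_const_zero, add_zero, zero_add]
    have inner : ∀ (u : R × Fin d') (v : Fin d × Fin d'),
        (∑ x3 : R, ∑ x4 : Fin d',
          star (S (x3, x4) u) * star (T v x) * (S (x3, x4) u * T v y))
        = (∑ x3 : R, ∑ x4 : Fin d', star (S (x3, x4) u) * S (x3, x4) u)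
            * (star (T v x) * T v y) := by
      intro u v
      rw [Finset.sum_mul]
      refine Finset.sum_congr rfl fun x3 _ => ?_
      rw [Finset.sum_mul]
      exact Finset.sum_congr rfl fun x4 _ => by ring
    have hSdiag : ∀ u : R × Fin d',
        (∑ x3 : R, ∑ x4 : Fin d', star (S (x3, x4) u) * S (x3, x4) u) = τ u u := by
      intro u
      simp_rw [hSs]
      have h9 : τ u u = ∑ w : R × Fin d', S u w * S w u := by
        rw [← hSS, Matrix.mul_apply]
      rw [h9, Fintype.sum_prod_type]
    have hτsum : (∑ x1 : R, ∑ y1 : Fin d', τ (x1, y1) (x1, y1)) = 1 := by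
      have := hτtr
      rw [Matrix.trace] at this
      rw [← this, Fintype.sum_prod_type]
      rfl
    have hTpart : (∑ x2 : Fin d, ∑ y2 : Fin d', star (T (x2, y2) x) * T (x2, y2) y)
        = (1 - P) x y := by
      simp_rw [hTs]
      rw [← hTT, Matrix.mul_apply, Fintype.sum_prod_type]
    simp_rw [inner, hSdiag, ← Finset.mul_sum, ← Finset.sum_mul, hτsum, one_mul]
    exact hTpart
  have hKnorm : ∑ e, (K e)ᴴ * K e = 1 := by
    rw [Fintype.sum_sum_type, hsucc, hfail]
    abel
  -- probability vector
  set pr : Fin 2 → ℝ := fun t => if t = 0 then (d : ℝ)⁻¹ else 1 - (d : ℝ)⁻¹ with hprdef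
  have hprpos : ∀ t, 0 ≤ pr t := by
    intro t
    have h1 : (d : ℝ)⁻¹ ≤ 1 := by
      rw [inv_le_one_iff₀]
      right
      exact_mod_cast hd
    fin_cases t <;> simp [hprdef] <;> linarith [inv_nonneg.mpr hdR.le]
  have hprsum : ∑ t, pr t = 1 := by
    rw [Fin.sum_univ_two]
    simp [hprdef]
  have htrChoiGen : ∀ (L : Matrix (Fin d) (Fin d) ℂ →ₗ[ℂ] Matrix (Fin d') (Fin d') ℂ),
      (∀ X, (L X).trace = X.trace) → (ChoiOf ⇑L).trace = 1 := by
    intro L htp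
    have h1 : ∀ i : Fin d, ∑ b : Fin d', (L (Matrix.single i i 1)) b b = 1 := by
      intro i
      have h2 := htp (Matrix.single i i 1)
      rw [trace_stdBasisMatrix, if_pos rfl] at h2
      simpa [Matrix.trace, Matrix.diag] using h2
    simp only [Matrix.trace, Matrix.diag, ChoiOf, Matrix.of_apply, Fintype.sum_prod_type,
      ← Finset.mul_sum, h1]
    simp only [mul_one, Finset.sum_const, Finset.card_univ, Fintype.card_fin, nsmul_eq_mul]
    field_simp
  -- the steering identity
  have hZgen : ∀ (L : Matrix (Fin d) (Fin d) ℂ →ₗ[ℂ] Matrix (Fin d') (Fin d') ℂ),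
      (∀ X, (L X).trace = X.trace) →
      krausMap K (ChoiOf ⇑L) = cqState pr (fun t : Fin 2 => if t = 0 then extChan L ρ else τ) := by
    intro L htp
    have htrChoi : (ChoiOf ⇑L).trace = 1 := htrChoiGen L htp
    have h2 : ∀ i j : Fin d, ∑ b : Fin d', (L (Matrix.single j i 1)) b b
        = if j = i then 1 else 0 := by
      intro i j
      have h3 := htp (Matrix.single j i 1)
      rw [trace_stdBasisMatrix] at h3
      simpa [Matrix.trace, Matrix.diag] using h3
    have hρAd : ∑ i, ptraceA ρ i i = 1 := by
      simpa [Matrix.trace, Matrix.diag] using hρAtr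
    have htrPC : (P * ChoiOf ⇑L).trace = (d : ℂ)⁻¹ := by
      simp only [Matrix.trace, Matrix.diag, Matrix.mul_apply, hPdef, Matrix.of_apply, ChoiOf,
        Fintype.sum_prod_type, ite_mul, zero_mul, mul_ite, mul_zero, sum_ite_const,
        Finset.sum_ite_eq, Finset.sum_ite_eq', Finset.mem_univ, if_true]
      refine Eq.trans (Finset.sum_congr rfl fun i _ => Finset.sum_comm) ?_
      simp_rw [mul_one, ← Finset.mul_sum, h2]
      simp only [mul_ite, mul_one, mul_zero, Finset.sum_ite_eq', Finset.mem_univ, if_true]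
      rw [← Finset.sum_mul, hρAd, one_mul]
    have hZsucc : ∑ e : R × Fin d, K (Sum.inl e) * ChoiOf ⇑L * (K (Sum.inl e))ᴴ
        = Matrix.of fun p q : Fin 2 × (R × Fin d') =>
            if p.1 = 0 ∧ q.1 = 0 then (d : ℂ)⁻¹ * extChan L ρ p.2 q.2 else 0 := by
      ext p q
      simp only [hKdef, Sum.elim_inl, Matrix.sum_apply, Matrix.mul_apply,
        Matrix.conjTranspose_apply, Matrix.of_apply, Fintype.sum_prod_type,
        apply_ite (star : ℂ → ℂ), star_zero, ite_mul, zero_mul, mul_ite, mul_zero,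
        sum_ite_const, Finset.sum_ite_eq, Finset.sum_ite_eq', Finset.mem_univ, if_true,
        ite_and]
      by_cases hp : p.1 = 0
      · by_cases hq : q.1 = 0
        · rw [if_pos hq, if_pos hp, if_pos hp, if_pos hq]
          simp only [extChan, Matrix.of_apply]
          rw [linmap_apply_eq_sum L]
          simp_rw [Finset.mul_sum, Finset.sum_mul]
          refine Eq.trans (Finset.sum_congr rfl fun a _ =>
            Finset.sum_congr rfl fun b _ => Finset.sum_comm) ?_
          refine Eq.trans (Finset.sum_congr rfl fun a _ => Finset.sum_comm) ?_
          refine Eq.trans Finset.sum_comm ?_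
          refine Eq.trans (Finset.sum_congr rfl fun a _ =>
            Finset.sum_congr rfl fun b _ => Finset.sum_comm) ?_
          refine Eq.trans (Finset.sum_congr rfl fun a _ => Finset.sum_comm) ?_
          refine Finset.sum_congr rfl fun i _ => Finset.sum_congr rfl fun j _ => ?_
          simp only [ChoiOf, Matrix.of_apply]
          rw [← hWsum (p.2.1, i) (q.2.1, j), Fintype.sum_prod_type]
          simp only [Finset.sum_mul, Finset.mul_sum]
          exact Finset.sum_congr rfl fun a _ => Finset.sum_congr rfl fun b _ => by ring
        · simp [hp, hq]
      · simp [hp]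
    have hTCT : (T * ChoiOf ⇑L * T).trace = 1 - (d : ℂ)⁻¹ := by
      rw [Matrix.trace_mul_cycle, hTT, Matrix.sub_mul, Matrix.one_mul, Matrix.trace_sub,
        htrChoi, htrPC]
    have hSτ : ∀ w w', ∑ u, S w u * star (S w' u) = τ w w' := by
      intro w w'
      conv_rhs => rw [← hSS]
      rw [Matrix.mul_apply]
      exact Finset.sum_congr rfl fun u _ => by rw [hSs]
    have hZfail : ∑ uv : (R × Fin d') × (Fin d × Fin d'),
        K (Sum.inr uv) * ChoiOf ⇑L * (K (Sum.inr uv))ᴴ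
        = Matrix.of fun p q : Fin 2 × (R × Fin d') =>
            if p.1 = 1 ∧ q.1 = 1 then (1 - (d : ℂ)⁻¹) * τ p.2 q.2 else 0 := by
      ext p q
      simp only [hKdef, Sum.elim_inr, Matrix.sum_apply, Matrix.mul_apply,
        Matrix.conjTranspose_apply, Matrix.of_apply, Fintype.sum_prod_type,
        apply_ite (star : ℂ → ℂ), star_zero, star_mul', ite_mul, zero_mul, mul_ite, mul_zero,
        sum_ite_const, Finset.sum_ite_eq, Finset.sum_ite_eq', Finset.mem_univ, if_true,
        ite_and]
      by_cases hp : p.1 = 1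
      · by_cases hq : q.1 = 1
        · rw [if_pos hq, if_pos hp, if_pos hp, if_pos hq]
          have h8 : (∑ v1 : Fin d, ∑ v2 : Fin d', ∑ w1 : Fin d, ∑ w2 : Fin d',
              (∑ a4 : Fin d, ∑ a5 : Fin d',
                T (v1, v2) (a4, a5) * ChoiOf ⇑L (a4, a5) (w1, w2)) * T (w1, w2) (v1, v2))
              = 1 - (d : ℂ)⁻¹ := by
            rw [← hTCT]
            simp only [Matrix.trace, Matrix.diag, Matrix.mul_apply, Fintype.sum_prod_type]
          have hSτ' : (∑ a : R, ∑ b : Fin d', S p.2 (a, b) * star (S q.2 (a, b)))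
              = τ p.2 q.2 := by
            rw [← hSτ p.2 q.2, Fintype.sum_prod_type]
          calc (∑ a : R, ∑ b : Fin d', ∑ x1 : Fin d, ∑ y1 : Fin d', ∑ x2 : Fin d,
                  ∑ x3 : Fin d', (∑ x4 : Fin d, ∑ x5 : Fin d',
                    S p.2 (a, b) * T (x1, y1) (x4, x5) * ChoiOf ⇑L (x4, x5) (x2, x3)) *
                    (star (S q.2 (a, b)) * star (T (x1, y1) (x2, x3))))
              = ∑ a : R, ∑ b : Fin d',
                  (S p.2 (a, b) * star (S q.2 (a, b))) * (1 - (d : ℂ)⁻¹) := by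
                refine Finset.sum_congr rfl fun a _ => Finset.sum_congr rfl fun b _ => ?_
                rw [← h8]
                simp_rw [hTs]
                simp only [Finset.sum_mul, Finset.mul_sum]
                refine Finset.sum_congr rfl fun c1 _ => Finset.sum_congr rfl fun c2 _ =>
                  Finset.sum_congr rfl fun c3 _ => Finset.sum_congr rfl fun c4 _ =>
                  Finset.sum_congr rfl fun c5 _ => Finset.sum_congr rfl fun c6 _ => by ring
            _ = (1 - (d : ℂ)⁻¹) * τ p.2 q.2 := by
                simp_rw [← Finset.sum_mul, hSτ']
                ring
        · simp [hp, hq]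
      · simp [hp]
    rw [krausMap_apply, Fintype.sum_sum_type, hZsucc, hZfail]
    ext ⟨t, w⟩ ⟨t', w'⟩
    fin_cases t <;> fin_cases t' <;>
      simp [cqState, hprdef, Matrix.add_apply] <;> push_cast <;> ring
  -- densities
  have hextdens : ∀ (L : Matrix (Fin d) (Fin d) ℂ →ₗ[ℂ] Matrix (Fin d') (Fin d') ℂ),
      IsCompletelyPositive L → (∀ X, (L X).trace = X.trace) → IsDensity (extChan L ρ) := by
    intro L hcp htp
    constructor
    · obtain ⟨e⟩ := Fintype.truncEquivFin R
      have hX' := hρ.1.submatrix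
        (fun p : Fin (Fintype.card R) × Fin d => ((e.symm p.1 : R), p.2))
      have h2 := hcp (Fintype.card R) _ hX'
      have h3 : extChan L ρ = (Matrix.of fun (p q : Fin (Fintype.card R) × Fin d') =>
          L (Matrix.of fun a b =>
            (ρ.submatrix (fun p : Fin (Fintype.card R) × Fin d => ((e.symm p.1 : R), p.2))
              (fun p => ((e.symm p.1 : R), p.2))) (p.1, a) (q.1, b)) p.2 q.2).submatrix
          (fun w : R × Fin d' => ((e w.1 : Fin (Fintype.card R)), w.2))
          (fun w => ((e w.1 : Fin (Fintype.card R)), w.2)) := by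
        ext p q
        simp [extChan, Matrix.submatrix_apply]
      rw [h3]
      exact h2.submatrix _
    · have h4 : (extChan L ρ).trace
          = ∑ r : R, (L (Matrix.of fun a b => ρ ((r, a)) ((r, b)))).trace := by
        simp [Matrix.trace, Matrix.diag, extChan, Fintype.sum_prod_type]
      rw [h4]
      simp_rw [htp]
      have h5 : ∀ r : R, (Matrix.of fun a b => ρ ((r, a)) ((r, b))).trace
          = ∑ a : Fin d, ρ (r, a) (r, a) := by
        intro r
        simp [Matrix.trace, Matrix.diag]
      simp_rw [h5]
      have h6 := hρ.2
      rw [Matrix.trace] at h6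
      rw [← h6]
      rw [Fintype.sum_prod_type]
      rfl
  have hChoidens : ∀ (L : Matrix (Fin d) (Fin d) ℂ →ₗ[ℂ] Matrix (Fin d') (Fin d') ℂ),
      IsCompletelyPositive L → (∀ X, (L X).trace = X.trace) → IsDensity (ChoiOf ⇑L) := by
    intro L hcp htp
    refine ⟨?_, htrChoiGen L htp⟩
    set v : Matrix (Fin 1) (Fin d × Fin d) ℂ :=
      Matrix.of fun _ p => if p.2 = p.1 then ((Real.sqrt (d : ℝ)⁻¹ : ℝ) : ℂ) else 0 with hvdef
    set Φ : Matrix (Fin d × Fin d) (Fin d × Fin d) ℂ :=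
      Matrix.of fun p q => if p.2 = p.1 ∧ q.2 = q.1 then (d : ℂ)⁻¹ else 0 with hΦdef
    have hv : Φ = vᴴ * v := by
      ext x y
      simp only [hΦdef, hvdef, Matrix.mul_apply, Matrix.conjTranspose_apply, Matrix.of_apply,
        Finset.univ_unique, Finset.sum_singleton, apply_ite (star : ℂ → ℂ), star_zero,
        Complex.star_def, Complex.conj_ofReal]
      by_cases h1 : x.2 = x.1 <;> by_cases h2 : y.2 = y.1 <;> simp [h1, h2]
      rw [← mul_inv, ← Complex.ofReal_mul, Real.mul_self_sqrt hdR.le]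
      norm_num
    have hΦpsd : Φ.PosSemidef := by
      rw [hv]
      exact Matrix.posSemidef_conjTranspose_mul_self v
    have h2 := hcp d Φ hΦpsd
    have h3 : ChoiOf ⇑L = Matrix.of fun (p q : Fin d × Fin d') =>
        L (Matrix.of fun a b => Φ (p.1, a) (q.1, b)) p.2 q.2 := by
      ext p q
      have harg : (Matrix.of fun a b => Φ (p.1, a) (q.1, b))
          = (d : ℂ)⁻¹ • Matrix.single p.1 q.1 (1 : ℂ) := by
        ext a b
        simp only [hΦdef, Matrix.of_apply, Matrix.smul_single, smul_eq_mul, mul_one,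
          Matrix.single, and_comm]
        by_cases h5 : a = p.1 <;> by_cases h6 : b = q.1 <;>
          simp [h5, h6, eq_comm]
      rw [ChoiOf]
      simp only [Matrix.of_apply]
      rw [harg, LinearMap.map_smul, Matrix.smul_apply, smul_eq_mul]
    rw [h3]
    exact h2
  -- assemble
  set f1 : Fin 2 → Matrix (R × Fin d') (R × Fin d') ℂ :=
    fun t => if t = 0 then extChan M ρ else τ with hf1def
  set f2 : Fin 2 → Matrix (R × Fin d') (R × Fin d') ℂ :=
    fun t => if t = 0 then extChan N ρ else τ with hf2def
  have hf1 : ∀ t, IsDensity (f1 t) := by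
    intro t
    fin_cases t
    · simpa [hf1def] using hextdens M hMcp hMtp
    · simpa [hf1def] using hτ
  have hf2 : ∀ t, IsDensity (f2 t) := by
    intro t
    fin_cases t
    · simpa [hf2def] using hextdens N hNcp hNtp
    · simpa [hf2def] using hτ
  have hmain := hmono _ _ (krausMap K) (krausMap_cp K) (krausMap_trace K hKnorm)
    _ _ (hChoidens M hMcp hMtp) (hChoidens N hNcp hNtp)
  rw [hZgen M hMtp, hZgen N hNtp] at hmain
  rw [hds _ _ pr hprpos hprsum f1 f2 hf1 hf2] at hmain
  rw [Fin.sum_univ_two] at hmain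
  simp only [hf1def, hf2def, hprdef, if_pos, if_neg one_ne_zero] at hmain
  norm_num at hmain
  have hττ := hnonneg _ τ τ hτ hτ
  have hfac : (0 : ℝ) ≤ 1 - (d : ℝ)⁻¹ := by
    have h1 : (d : ℝ)⁻¹ ≤ 1 := by
      rw [inv_le_one_iff₀]; right; exact_mod_cast hd
    linarith
  have hmul : (d : ℝ) * (d : ℝ)⁻¹ = 1 := mul_inv_cancel₀ hdR.ne'
  have key := mul_le_mul_of_nonneg_left hmain hdR.le
  rw [mul_add, ← mul_assoc, ← mul_assoc, hmul, one_mul] at key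
  linarith [mul_nonneg (mul_nonneg hdR.le hfac) hττ]
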